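/- arXiv:2307.01339 — 2 statements merged into one kernel-verified Lean document; each statement's English description precedes it below -/
import Mathlib

section
/- Let K(r, θ) = (720m²/(r²+a²cos²θ)⁹)·(a⁴cos⁴θ − 4a³cos³θ·r − 6a²cos²θ·r² + 4a·cosθ·r³ + r⁴)·(a⁴cos⁴θ + 4a³cos³θ·r − 6a²cos²θ·r² − 4a·cosθ·r³ + r⁴)·(a²cos²θ − 2mr + r²) be the Karlhede invariant ∇_μR_{αβγδ}∇^μR^{αβγδ} of the Kerr black hole. Then: (i) whenever r² + a²cos²θ > 0 and a²cos²θ − 2mr + r² = 0, one has K(r, θ) = 0; in particular, if m² ≥ a²cos²θ then K vanishes at the infinite-redshift radii r = m ± √(m² − a²cos²θ). (ii) If 0 < a < m, then at the event horizon radius r₊ = m + √(m² − a²) one has K(r₊, π/2) = −720m²a²/r₊¹⁰ < 0, so the Karlhede invariant does not vanish on the Kerr event horizon. -/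
/-- The Karlhede invariant `∇_μ R_{αβγδ} ∇^μ R^{αβγδ}` of the Kerr black hole,
in Boyer–Lindquist coordinates `(r, θ)`. -/
noncomputable def kerrKarlhede (a m r θ : ℝ) : ℝ :=
  720 * m ^ 2 / (r ^ 2 + a ^ 2 * Real.cos θ ^ 2) ^ 9 *
    (a ^ 4 * Real.cos θ ^ 4 - 4 * a ^ 3 * Real.cos θ ^ 3 * r
      - 6 * a ^ 2 * Real.cos θ ^ 2 * r ^ 2 + 4 * a * Real.cos θ * r ^ 3 + r ^ 4) *
    (a ^ 4 * Real.cos θ ^ 4 + 4 * a ^ 3 * Real.cos θ ^ 3 * r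
      - 6 * a ^ 2 * Real.cos θ ^ 2 * r ^ 2 - 4 * a * Real.cos θ * r ^ 3 + r ^ 4) *
    (a ^ 2 * Real.cos θ ^ 2 - 2 * m * r + r ^ 2)

/-- (i) The Karlhede invariant of the Kerr black hole vanishes on the
infinite-redshift surfaces `a²cos²θ − 2mr + r² = 0`, in particular at the radii
`r = m ± √(m² − a²cos²θ)` whenever `m² ≥ a²cos²θ`; (ii) for `0 < a < m` it equals
`−720 m² a² / r₊¹⁰ < 0` at the event horizon `r₊ = m + √(m² − a²)` (at `θ = π/2`),
hence does not vanish on the Kerr event horizon. -/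
theorem kerrKarlhede_ergosurface_and_horizon (a m : ℝ) :
    (∀ r θ : ℝ, 0 < r ^ 2 + a ^ 2 * Real.cos θ ^ 2 →
      a ^ 2 * Real.cos θ ^ 2 - 2 * m * r + r ^ 2 = 0 → kerrKarlhede a m r θ = 0) ∧
    (∀ θ : ℝ, m ^ 2 ≥ a ^ 2 * Real.cos θ ^ 2 →
      kerrKarlhede a m (m + Real.sqrt (m ^ 2 - a ^ 2 * Real.cos θ ^ 2)) θ = 0 ∧
      kerrKarlhede a m (m - Real.sqrt (m ^ 2 - a ^ 2 * Real.cos θ ^ 2)) θ = 0) ∧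
    (0 < a → a < m →
      kerrKarlhede a m (m + Real.sqrt (m ^ 2 - a ^ 2)) (Real.pi / 2) =
        -(720 * m ^ 2 * a ^ 2) / (m + Real.sqrt (m ^ 2 - a ^ 2)) ^ 10 ∧
      kerrKarlhede a m (m + Real.sqrt (m ^ 2 - a ^ 2)) (Real.pi / 2) < 0) := by
  have hz : ∀ r θ : ℝ, a ^ 2 * Real.cos θ ^ 2 - 2 * m * r + r ^ 2 = 0 →
      kerrKarlhede a m r θ = 0 := by
    intro r θ h
    unfold kerrKarlhede
    rw [h, mul_zero]
  refine ⟨fun r θ _ h => hz r θ h, fun θ hm => ?_, fun ha ham => ?_⟩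
  · have hs : Real.sqrt (m ^ 2 - a ^ 2 * Real.cos θ ^ 2) ^ 2
        = m ^ 2 - a ^ 2 * Real.cos θ ^ 2 :=
      Real.sq_sqrt (by linarith)
    constructor <;> [apply hz; apply hz] <;> nlinarith [hs]
  · have hm0 : (0:ℝ) < m := lt_trans ha ham
    have hs : Real.sqrt (m ^ 2 - a ^ 2) ^ 2 = m ^ 2 - a ^ 2 :=
      Real.sq_sqrt (by nlinarith)
    have hs0 : 0 ≤ Real.sqrt (m ^ 2 - a ^ 2) := Real.sqrt_nonneg _
    set s := Real.sqrt (m ^ 2 - a ^ 2)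
    have hr : (0:ℝ) < m + s := by linarith
    have hr' : (m + s) ≠ 0 := ne_of_gt hr
    have hkey : kerrKarlhede a m (m + s) (Real.pi / 2)
        = -(720 * m ^ 2 * a ^ 2) / (m + s) ^ 10 := by
      unfold kerrKarlhede
      rw [Real.cos_pi_div_two]
      field_simp
      linear_combination ((m + s) ^ 18) * hs
    refine ⟨hkey, ?_⟩
    rw [hkey]
    apply div_neg_of_neg_of_pos
    · nlinarith [mul_pos (mul_pos hm0 hm0) (mul_pos ha ha)]
    · positivity
end

section
/- For every a > 0, the sextic polynomial p(r) = r⁶ − 21a²r⁴ + 35a⁴r² − 7a⁶ has exactly three positive real roots r₁ < r₂ < r₃, and they satisfy r₁ ∈ (0.4815·a, 0.4816·a), r₂ ∈ (1.2539·a, 1.2540·a) and r₃ ∈ (4.3812·a, 4.3813·a). -/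
/-- The sextic `p(r) = r⁶ − 21a²r⁴ + 35a⁴r² − 7a⁶` (equal to `−7` times the factor
appearing squared in the on-axis value of the gradient invariant `I₅` of the
Kerr–(anti-)de Sitter black hole). -/
noncomputable def axisSextic (a r : ℝ) : ℝ :=
  r ^ 6 - 21 * a ^ 2 * r ^ 4 + 35 * a ^ 4 * r ^ 2 - 7 * a ^ 6

/-- The rescaled sextic with `a = 1`. -/
private def qSex (x : ℝ) : ℝ := x ^ 6 - 21 * x ^ 4 + 35 * x ^ 2 - 7

private lemma qSex_cont : Continuous qSex := by
  unfold qSex; continuity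

/-- The underlying cubic `t³ − 21t² + 35t − 7` has at most three roots. -/
private lemma cubic_roots (t₁ t₂ t₃ : ℝ) (h12 : t₁ ≠ t₂) (h13 : t₁ ≠ t₃) (h23 : t₂ ≠ t₃)
    (e1 : t₁ ^ 3 - 21 * t₁ ^ 2 + 35 * t₁ - 7 = 0)
    (e2 : t₂ ^ 3 - 21 * t₂ ^ 2 + 35 * t₂ - 7 = 0)
    (e3 : t₃ ^ 3 - 21 * t₃ ^ 2 + 35 * t₃ - 7 = 0)
    (t : ℝ) (et : t ^ 3 - 21 * t ^ 2 + 35 * t - 7 = 0) :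
    t = t₁ ∨ t = t₂ ∨ t = t₃ := by
  by_contra h
  push_neg at h
  obtain ⟨n1, n2, n3⟩ := h
  have Q : ∀ s : ℝ, s ^ 3 - 21 * s ^ 2 + 35 * s - 7 = 0 → t ≠ s →
      t ^ 2 + t * s + s ^ 2 - 21 * (t + s) + 35 = 0 := by
    intro s es hts
    have hmul : (s - t) * (t ^ 2 + t * s + s ^ 2 - 21 * (t + s) + 35) = 0 := by
      linear_combination es - et
    rcases mul_eq_zero.mp hmul with h | h
    · exact absurd (by linarith [sub_eq_zero.mp h]) hts
    · exact h
  have Q1 := Q t₁ e1 n1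
  have Q2 := Q t₂ e2 n2
  have Q3 := Q t₃ e3 n3
  have h12' : (t₁ - t₂) * (t + t₁ + t₂ - 21) = 0 := by linear_combination Q1 - Q2
  have h13' : (t₁ - t₃) * (t + t₁ + t₃ - 21) = 0 := by linear_combination Q1 - Q3
  have e12 : t + t₁ + t₂ - 21 = 0 := by
    rcases mul_eq_zero.mp h12' with h | h
    · exact absurd (by linarith [sub_eq_zero.mp h]) h12
    · exact h
  have e13 : t + t₁ + t₃ - 21 = 0 := by
    rcases mul_eq_zero.mp h13' with h | h
    · exact absurd (by linarith [sub_eq_zero.mp h]) h13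
    · exact h
  exact h23 (by linarith)

private lemma exists_root_pos_neg (u v : ℝ) (huv : u ≤ v) (hu : qSex u < 0) (hv : 0 < qSex v) :
    ∃ s ∈ Set.Ioo u v, qSex s = 0 := by
  have h := intermediate_value_Ioo huv qSex_cont.continuousOn
  have : (0 : ℝ) ∈ Set.Ioo (qSex u) (qSex v) := ⟨hu, hv⟩
  obtain ⟨s, hs, hs0⟩ := h this
  exact ⟨s, hs, hs0⟩

private lemma exists_root_neg_pos (u v : ℝ) (huv : u ≤ v) (hu : 0 < qSex u) (hv : qSex v < 0) :
    ∃ s ∈ Set.Ioo u v, qSex s = 0 := by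
  have h := intermediate_value_Ioo' huv qSex_cont.continuousOn
  have : (0 : ℝ) ∈ Set.Ioo (qSex v) (qSex u) := ⟨hv, hu⟩
  obtain ⟨s, hs, hs0⟩ := h this
  exact ⟨s, hs, hs0⟩

/-- For every `a > 0`, the sextic `p(r) = r⁶ − 21a²r⁴ + 35a⁴r² − 7a⁶`
has exactly three positive real roots `r₁ < r₂ < r₃`, and they satisfy
`r₁ ∈ (0.4815·a, 0.4816·a)`, `r₂ ∈ (1.2539·a, 1.2540·a)`, `r₃ ∈ (4.3812·a, 4.3813·a)`. -/
theorem axisSextic_three_positive_roots (a : ℝ) (ha : 0 < a) :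
    ∃ r₁ r₂ r₃ : ℝ, 0 < r₁ ∧ r₁ < r₂ ∧ r₂ < r₃ ∧
      axisSextic a r₁ = 0 ∧ axisSextic a r₂ = 0 ∧ axisSextic a r₃ = 0 ∧
      (∀ r : ℝ, 0 < r → axisSextic a r = 0 → r = r₁ ∨ r = r₂ ∨ r = r₃) ∧
      (0.4815 * a < r₁ ∧ r₁ < 0.4816 * a) ∧
      (1.2539 * a < r₂ ∧ r₂ < 1.2540 * a) ∧
      (4.3812 * a < r₃ ∧ r₃ < 4.3813 * a) := by
  obtain ⟨s₁, ⟨hs₁l, hs₁r⟩, hq₁⟩ :=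
    exists_root_pos_neg 0.4815 0.4816 (by norm_num)
      (by unfold qSex; norm_num) (by unfold qSex; norm_num)
  obtain ⟨s₂, ⟨hs₂l, hs₂r⟩, hq₂⟩ :=
    exists_root_neg_pos 1.2539 1.2540 (by norm_num)
      (by unfold qSex; norm_num) (by unfold qSex; norm_num)
  obtain ⟨s₃, ⟨hs₃l, hs₃r⟩, hq₃⟩ :=
    exists_root_pos_neg 4.3812 4.3813 (by norm_num)
      (by unfold qSex; norm_num) (by unfold qSex; norm_num)
  have hs₁pos : 0 < s₁ := by linarith
  have hs₂pos : 0 < s₂ := by linarith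
  have hs₃pos : 0 < s₃ := by linarith
  have hs12 : s₁ < s₂ := by linarith
  have hs23 : s₂ < s₃ := by linarith
  refine ⟨a * s₁, a * s₂, a * s₃, by positivity,
    by nlinarith, by nlinarith, ?_, ?_, ?_, ?_, ?_, ?_, ?_⟩
  · unfold axisSextic; unfold qSex at hq₁; linear_combination a ^ 6 * hq₁
  · unfold axisSextic; unfold qSex at hq₂; linear_combination a ^ 6 * hq₂
  · unfold axisSextic; unfold qSex at hq₃; linear_combination a ^ 6 * hq₃
  · intro r hr hroot
    -- pass to the cubic in t = (r/a)²
    have ha' : a ≠ 0 := ne_of_gt ha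
    set x : ℝ := r / a with hx
    have hxq : qSex x = 0 := by
      have hax : a * x = r := by rw [hx]; field_simp
      unfold axisSextic at hroot
      unfold qSex
      have h6 : a ^ 6 * (x ^ 6 - 21 * x ^ 4 + 35 * x ^ 2 - 7) = 0 := by
        rw [← hax] at hroot; linear_combination hroot
      have ha6 : (a : ℝ) ^ 6 ≠ 0 := by positivity
      exact (mul_eq_zero.mp h6).resolve_left ha6
    have hxpos : 0 < x := div_pos hr ha
    have hsq : ∀ s : ℝ, qSex s = 0 →
        (s ^ 2) ^ 3 - 21 * (s ^ 2) ^ 2 + 35 * s ^ 2 - 7 = 0 := by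
      intro s hs; unfold qSex at hs; linear_combination hs
    have hne12 : s₁ ^ 2 ≠ s₂ ^ 2 := by nlinarith
    have hne13 : s₁ ^ 2 ≠ s₃ ^ 2 := by nlinarith
    have hne23 : s₂ ^ 2 ≠ s₃ ^ 2 := by nlinarith
    have := cubic_roots (s₁ ^ 2) (s₂ ^ 2) (s₃ ^ 2) hne12 hne13 hne23
      (hsq s₁ hq₁) (hsq s₂ hq₂) (hsq s₃ hq₃) (x ^ 2) (hsq x hxq)
    have hxs : ∀ s : ℝ, 0 < s → x ^ 2 = s ^ 2 → r = a * s := by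
      intro s hs hxe
      have : x = s := by nlinarith
      rw [← this, hx]; field_simp
    rcases this with h | h | h
    · exact Or.inl (hxs s₁ hs₁pos h)
    · exact Or.inr (Or.inl (hxs s₂ hs₂pos h))
    · exact Or.inr (Or.inr (hxs s₃ hs₃pos h))
  · constructor <;> nlinarith
  · constructor <;> nlinarith
  · constructor <;> nlinarith
end
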